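/- Let G be a finite nilpotent group acting transitively and faithfully on a finite set Ω, and let H be a Hall subgroup of G. Then G permutes the set of H-orbits on Ω (i.e., for every g ∈ G and every H-orbit Δ, the set Δ^g is again an H-orbit), and the kernel of this action of G on the set of H-orbits is exactly H: an element g ∈ G maps every H-orbit to itself if and only if g ∈ H. -/
import Mathlib

open Subgroup MulAction Pointwise

section Aux

variable {G : Type*} [Group G] [Finite G]

/-- In a finite nilpotent group, every Sylow subgroup for a prime dividing the order of
a Hall subgroup is contained in that Hall subgroup. -/
lemma sylow_le_hall (hnil : Group.IsNilpotent G) (H : Subgroup G)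
    (hHall : Nat.Coprime (Nat.card ↥H) H.index) {p : ℕ} [Fact p.Prime]
    (hp : p ∣ Nat.card ↥H) (P : Sylow p G) : (P : Subgroup G) ≤ H := by
  have htfae := (isNilpotent_of_finite_tfae (G := G)).out 0 3
  have hnorm : (P : Subgroup G).Normal := htfae.mp hnil p ‹_› P
  set K : Subgroup G := H ⊔ (P : Subgroup G) with hK
  have hHK : H ≤ K := le_sup_left
  have hPK : (P : Subgroup G) ≤ K := le_sup_right
  -- second isomorphism theorem gives equality of indices
  have hiq : ((P : Subgroup G).subgroupOf H).index = ((P : Subgroup G).subgroupOf K).index := by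
    rw [Subgroup.index_eq_card, Subgroup.index_eq_card]
    exact Nat.card_congr (QuotientGroup.quotientInfEquivProdNormalQuotient H (P : Subgroup G)).toEquiv
  have h1 : Nat.card ↥((P : Subgroup G).subgroupOf H) * ((P : Subgroup G).subgroupOf H).index
      = Nat.card ↥H := Subgroup.card_mul_index _
  have h2 : Nat.card ↥((P : Subgroup G).subgroupOf K) * ((P : Subgroup G).subgroupOf K).index
      = Nat.card ↥K := Subgroup.card_mul_index _
  have h3 : Nat.card ↥(H.subgroupOf K) * (H.subgroupOf K).index = Nat.card ↥K :=
    Subgroup.card_mul_index _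
  have hcP : Nat.card ↥((P : Subgroup G).subgroupOf K) = Nat.card ↥(P : Subgroup G) :=
    Nat.card_congr (Subgroup.subgroupOfEquivOfLe hPK).toEquiv
  have hcH : Nat.card ↥(H.subgroupOf K) = Nat.card ↥H :=
    Nat.card_congr (Subgroup.subgroupOfEquivOfLe hHK).toEquiv
  set i := ((P : Subgroup G).subgroupOf H).index with hi
  set r := (H.subgroupOf K).index with hr
  -- card H * r = card P * i
  have hkey : Nat.card ↥H * r = Nat.card ↥(P : Subgroup G) * i := by
    rw [← hcH]
    rw [h3, ← h2, hcP, hiq]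
  have hidvd : i ∣ Nat.card ↥H := Dvd.intro_left _ h1
  obtain ⟨j, hj⟩ := hidvd
  have hipos : 0 < i := by
    rcases Nat.eq_zero_or_pos i with h0 | h0
    · exfalso
      have := Nat.card_pos (α := ↥H)
      rw [← h1, h0, mul_zero] at this
      exact absurd this (lt_irrefl 0)
    · exact h0
  have hrP : r ∣ Nat.card ↥(P : Subgroup G) := by
    refine ⟨j, ?_⟩
    have : i * (j * r) = i * (Nat.card ↥(P : Subgroup G)) := by
      calc i * (j * r) = (i * j) * r := by ring
        _ = Nat.card ↥H * r := by rw [← hj]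
        _ = Nat.card ↥(P : Subgroup G) * i := hkey
        _ = i * Nat.card ↥(P : Subgroup G) := by ring
    rw [mul_comm]
    exact (Nat.eq_of_mul_eq_mul_left hipos this).symm
  obtain ⟨n, hn⟩ := P.isPGroup'.exists_card_eq
  have hrindex : r ∣ H.index := by
    have := Subgroup.relIndex_mul_index hHK
    exact ⟨K.index, this.symm⟩
  have hpcop : Nat.Coprime p H.index := Nat.Coprime.coprime_dvd_left hp hHall
  have hpn : Nat.Coprime (p ^ n) H.index := hpcop.pow_left n
  have hr1 : r = 1 := by
    have : r ∣ Nat.gcd (p ^ n) H.index := Nat.dvd_gcd (hn ▸ hrP) hrindex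
    rwa [Nat.Coprime.gcd_eq_one hpn, Nat.dvd_one] at this
  have hKH : K ≤ H := Subgroup.relIndex_eq_one.mp hr1
  exact hPK.trans hKH

/-- An element of a finite nilpotent group all of whose prime divisors of its order divide
the order of a Hall subgroup lies in that Hall subgroup. -/
lemma mem_hall_of_primes (hnil : Group.IsNilpotent G) (H : Subgroup G)
    (hHall : Nat.Coprime (Nat.card ↥H) H.index) :
    ∀ n (x : G), orderOf x = n → (∀ p : ℕ, p.Prime → p ∣ n → p ∣ Nat.card ↥H) → x ∈ H := by
  intro n
  induction n using Nat.strong_induction_on with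
  | _ n ih =>
    intro x hx hprimes
    have hn0 : n ≠ 0 := by
      have := (isOfFinOrder_of_finite x).orderOf_pos
      omega
    rcases eq_or_ne n 1 with h1 | h1
    · have : x = 1 := orderOf_eq_one_iff.mp (by rw [hx, h1])
      rw [this]; exact H.one_mem
    set p := n.minFac with hpdef
    have pp : p.Prime := Nat.minFac_prime h1
    haveI : Fact p.Prime := ⟨pp⟩
    have hpn : p ∣ n := Nat.minFac_dvd n
    set a := p ^ n.factorization p with ha
    set b := n / a with hb
    have hab : a * b = n := Nat.ordProj_mul_ordCompl_eq_self n p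
    have hbpos : 0 < b := by
      rcases Nat.eq_zero_or_pos b with h0 | h0
      · exfalso; rw [h0, mul_zero] at hab; exact hn0 hab.symm
      · exact h0
    have hapos : 1 < a := by
      have hk : 0 < n.factorization p := pp.factorization_pos_of_dvd hn0 hpn
      exact Nat.one_lt_pow hk.ne' pp.one_lt
    have hblt : b < n := by
      calc b = 1 * b := (one_mul b).symm
        _ < a * b := (Nat.mul_lt_mul_right hbpos).mpr hapos
        _ = n := hab
    have hbdvd : b ∣ n := ⟨a, by rw [← hab, mul_comm]⟩
    have hcop : Nat.Coprime a b := (Nat.coprime_ordCompl pp hn0).pow_left _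
    obtain ⟨u, v, huv⟩ := hcop.isCoprime
    have hxn : x ^ (n : ℤ) = 1 := by
      rw [zpow_natCast, ← hx, pow_orderOf_eq_one]
    set y := x ^ (v * (b : ℤ)) with hy
    set z := x ^ (u * (a : ℤ)) with hzdef
    have hxsplit : x = z * y := by
      rw [hzdef, hy, ← zpow_add]
      have : u * (a : ℤ) + v * (b : ℤ) = 1 := huv
      rw [this, zpow_one]
    have hyo : orderOf y ∣ a := by
      apply orderOf_dvd_of_pow_eq_one
      rw [hy, ← zpow_natCast, ← zpow_mul]
      have : v * (b : ℤ) * (a : ℕ) = (n : ℤ) * v := by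
        push_cast
        rw [← hab]; push_cast; ring
      rw [this, zpow_mul, hxn, one_zpow]
    have hzo : orderOf z ∣ b := by
      apply orderOf_dvd_of_pow_eq_one
      rw [hzdef, ← zpow_natCast, ← zpow_mul]
      have : u * (a : ℤ) * (b : ℕ) = (n : ℤ) * u := by
        push_cast
        rw [← hab]; push_cast; ring
      rw [this, zpow_mul, hxn, one_zpow]
    have hyH : y ∈ H := by
      obtain ⟨k, -, hk⟩ := (Nat.dvd_prime_pow pp).mp hyo
      have hpg : IsPGroup p (Subgroup.zpowers y) :=
        IsPGroup.of_card (by rw [Nat.card_zpowers, hk])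
      obtain ⟨Q, hQ⟩ := hpg.exists_le_sylow
      exact sylow_le_hall hnil H hHall (hprimes p pp hpn) Q (hQ (Subgroup.mem_zpowers y))
    have hzH : z ∈ H := by
      refine ih (orderOf z) (lt_of_le_of_lt (Nat.le_of_dvd hbpos hzo) hblt) z rfl ?_
      intro q hq hqz
      exact hprimes q hq ((hqz.trans hzo).trans hbdvd)
    rw [hxsplit]
    exact H.mul_mem hzH hyH

/-- A Hall subgroup of a finite nilpotent group is normal. -/
lemma hall_normal (hnil : Group.IsNilpotent G) (H : Subgroup G)
    (hHall : Nat.Coprime (Nat.card ↥H) H.index) : H.Normal := by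
  constructor
  intro h hh g
  apply mem_hall_of_primes hnil H hHall (orderOf (g * h * g⁻¹)) _ rfl
  intro p pp hp
  have hsemi : SemiconjBy g h (g * h * g⁻¹) := by unfold SemiconjBy; group
  have hconj : orderOf h = orderOf (g * h * g⁻¹) := hsemi.orderOf_eq g
  have hdvd : orderOf h ∣ Nat.card ↥H := by
    have h1 : orderOf (H.subtype ⟨h, hh⟩) = orderOf (⟨h, hh⟩ : ↥H) :=
      orderOf_injective H.subtype H.subtype_injective _
    have h2 : H.subtype ⟨h, hh⟩ = h := rfl
    rw [h2] at h1
    rw [h1]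
    exact orderOf_dvd_natCard _
  exact (hconj ▸ hp).trans hdvd

end Aux

/-- If a finite nilpotent group `G` acts transitively and faithfully on a finite set `Ω`
and `H` is a Hall subgroup of `G`, then `G` permutes the `H`-orbits, and the kernel of
this action is exactly `H`. -/
theorem hall_orbit_action_kernel {G : Type*} [Group G] [Finite G]
    (hnil : Group.IsNilpotent G) {Ω : Type*} [Finite Ω] [MulAction G Ω] [FaithfulSMul G Ω]
    [MulAction.IsPretransitive G Ω]
    (H : Subgroup G) (hHall : Nat.Coprime (Nat.card ↥H) H.index) :
    (∀ (g : G) (α : Ω), ∃ β : Ω,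
        (fun x : Ω => g • x) '' MulAction.orbit H α = MulAction.orbit H β) ∧
      (∀ g : G,
        (∀ α : Ω, (fun x : Ω => g • x) '' MulAction.orbit H α = MulAction.orbit H α)
          ↔ g ∈ H) := by
  haveI hnorm : H.Normal := hall_normal hnil H hHall
  have himg : ∀ (g : G) (α : Ω),
      (fun x : Ω => g • x) '' MulAction.orbit H α = MulAction.orbit H (g • α) := by
    intro g α
    ext x
    simp only [Set.mem_image, MulAction.mem_orbit_iff]
    constructor
    · rintro ⟨y, ⟨h, rfl⟩, rfl⟩
      refine ⟨⟨g * (h : G) * g⁻¹, hnorm.conj_mem _ h.2 g⟩, ?_⟩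
      show (g * (h : G) * g⁻¹) • (g • α) = g • ((h : G) • α)
      rw [smul_smul, smul_smul]
      congr 1
      group
    · rintro ⟨h, rfl⟩
      refine ⟨(g⁻¹ * (h : G) * g) • α,
        ⟨⟨g⁻¹ * (h : G) * g, by simpa using hnorm.conj_mem _ h.2 g⁻¹⟩, rfl⟩, ?_⟩
      show g • ((g⁻¹ * (h : G) * g) • α) = (h : G) • (g • α)
      rw [smul_smul, smul_smul]
      congr 1
      group
  refine ⟨fun g α => ⟨g • α, himg g α⟩, fun g => ⟨?_, ?_⟩⟩
  · -- forward: kernel is contained in H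
    intro hg
    have hg' : ∀ α : Ω, MulAction.orbit H (g • α) = MulAction.orbit H α := fun α => by
      rw [← himg g α, hg α]
    have hpow : ∀ (k : ℕ) (α : Ω), MulAction.orbit H (g ^ k • α) = MulAction.orbit H α := by
      intro k
      induction k with
      | zero => intro α; simp
      | succ k ihk =>
        intro α
        rw [pow_succ, mul_smul]
        rw [ihk (g • α), hg' α]
    refine mem_hall_of_primes hnil H hHall (orderOf g) g rfl ?_
    intro q hq hqn
    by_contra hqm
    set n := orderOf g with hndef
    have hn0 : n ≠ 0 := by
      have := (isOfFinOrder_of_finite g).orderOf_pos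
      omega
    set z := g ^ (n / q) with hzdef
    have hzq : z ^ q = 1 := by
      rw [hzdef, ← pow_mul, Nat.div_mul_cancel hqn, hndef, pow_orderOf_eq_one]
    have hnq : 0 < n / q := Nat.div_pos (Nat.le_of_dvd (Nat.pos_of_ne_zero hn0) hqn) hq.pos
    have hzne : z ≠ 1 := by
      intro hcon
      have hdv : n ∣ n / q := orderOf_dvd_of_pow_eq_one (by rw [← hzdef, hcon])
      have : n ≤ n / q := Nat.le_of_dvd hnq hdv
      have : n / q < n := Nat.div_lt_self (Nat.pos_of_ne_zero hn0) hq.one_lt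
      omega
    have hoz : orderOf z = q := by
      rcases (Nat.dvd_prime hq).mp (orderOf_dvd_of_pow_eq_one hzq) with h1 | h1
      · exact absurd (orderOf_eq_one_iff.mp h1) hzne
      · exact h1
    have hzorb : ∀ α : Ω, MulAction.orbit H (z • α) = MulAction.orbit H α := fun α =>
      hpow (n / q) α
    -- the key fixed point argument: z acts trivially on Ω
    have hfix : ∀ β : Ω, z • β = β := by
      intro β
      set Δ : Set Ω := MulAction.orbit H β with hΔ
      set M : Subgroup G := H ⊔ Subgroup.zpowers z with hM
      have hstab : M ≤ MulAction.stabilizer G Δ := by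
        apply sup_le
        · intro h hh
          rw [MulAction.mem_stabilizer_iff]
          show h • Δ = Δ
          rw [hΔ, ← Set.image_smul, himg]
          exact MulAction.orbit_eq_iff.mpr ⟨⟨h, hh⟩, rfl⟩
        · rw [Subgroup.zpowers_le, MulAction.mem_stabilizer_iff]
          show z • Δ = Δ
          rw [hΔ, ← Set.image_smul, himg, hzorb]
      have hMmem : ∀ x ∈ M, ∀ ω ∈ Δ, x • ω ∈ Δ := by
        intro x hx ω hω
        have hxΔ : x • Δ = Δ := hstab hx
        rw [← hxΔ]
        exact Set.smul_mem_smul_set hω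
      have hzM : z ∈ M := Subgroup.mem_sup_right (Subgroup.mem_zpowers z)
      haveI : Fact q.Prime := ⟨hq⟩
      haveI := hnil
      set zm : ↥M := ⟨z, hzM⟩ with hzm
      have hozm : orderOf zm = q := by
        have h1 : orderOf (M.subtype zm) = orderOf zm :=
          orderOf_injective M.subtype M.subtype_injective _
        have h2 : M.subtype zm = z := rfl
        rw [h2, hoz] at h1
        exact h1.symm
      have hpz : IsPGroup q (Subgroup.zpowers zm) :=
        IsPGroup.of_card (by rw [Nat.card_zpowers, hozm, pow_one])
      obtain ⟨Q, hzQ⟩ := hpz.exists_le_sylow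
      have htfae := (isNilpotent_of_finite_tfae (G := ↥M)).out 0 3
      have hQn : (Q : Subgroup ↥M).Normal := htfae.mp inferInstance q ‹_› Q
      set Q' : Subgroup G := (Q : Subgroup ↥M).map M.subtype with hQ'
      have hQ'M : Q' ≤ M := Subgroup.map_subtype_le _
      have hzQ' : z ∈ Q' :=
        Subgroup.mem_map.mpr ⟨zm, hzQ (Subgroup.mem_zpowers zm), rfl⟩
      have hconj : ∀ u ∈ Q', ∀ x ∈ M, x * u * x⁻¹ ∈ Q' := by
        intro u hu x hx
        rcases Subgroup.mem_map.mp hu with ⟨v, hv, rfl⟩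
        exact Subgroup.mem_map.mpr
          ⟨(⟨x, hx⟩ : ↥M) * v * (⟨x, hx⟩ : ↥M)⁻¹, hQn.conj_mem v hv ⟨x, hx⟩, rfl⟩
      -- Q' acts on Δ
      letI actsmul : SMul ↥Q' ↥Δ :=
        ⟨fun u ω => ⟨(u : G) • (ω : Ω), hMmem _ (hQ'M u.2) _ ω.2⟩⟩
      letI : MulAction ↥Q' ↥Δ :=
        { one_smul := fun ω => Subtype.ext (by
            show ((1 : ↥Q') : G) • (ω : Ω) = (ω : Ω)
            simp)
          mul_smul := fun u v ω => Subtype.ext (by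
            show ((u * v : ↥Q') : G) • (ω : Ω) = (u : G) • ((v : G) • (ω : Ω))
            rw [Subgroup.coe_mul, mul_smul]) }
      have hq'pg : IsPGroup q ↥Q' := Q.isPGroup'.map M.subtype
      have hqΔ : ¬ q ∣ Nat.card ↥Δ := by
        intro hdvd
        apply hqm
        refine hdvd.trans ?_
        have hcΔ : Nat.card ↥Δ = (MulAction.stabilizer ↥H β).index := by
          rw [MulAction.index_stabilizer, hΔ, Nat.card_coe_set_eq]
        rw [hcΔ]
        exact Subgroup.index_dvd_card _
      obtain ⟨ω0, hω0⟩ := hq'pg.nonempty_fixed_point_of_prime_not_dvd_card ↥Δ hqΔ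
      have hfixall : ∀ u, (hu : u ∈ Q') → u • (ω0 : Ω) = (ω0 : Ω) := by
        intro u hu
        have h1 : (⟨u, hu⟩ : ↥Q') • ω0 = ω0 := (MulAction.mem_fixedPoints.mp hω0) ⟨u, hu⟩
        exact congrArg Subtype.val h1
      obtain ⟨h, hh⟩ : ∃ h : ↥H, (h : G) • β = (ω0 : Ω) := by
        have hmem : (ω0 : Ω) ∈ MulAction.orbit H β := ω0.2
        rcases MulAction.mem_orbit_iff.mp hmem with ⟨h, hhh⟩
        exact ⟨h, hhh⟩
      have hc : ((h : G) * z * (h : G)⁻¹) • (ω0 : Ω) = (ω0 : Ω) :=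
        hfixall _ (hconj z hzQ' _ (Subgroup.mem_sup_left h.2))
      have hβ : β = (h : G)⁻¹ • (ω0 : Ω) := by rw [← hh, inv_smul_smul]
      rw [hβ, smul_smul]
      have hzc : z * (h : G)⁻¹ = (h : G)⁻¹ * ((h : G) * z * (h : G)⁻¹) := by group
      rw [hzc, ← smul_smul, hc]
    have hz1 : z = 1 := by
      apply eq_of_smul_eq_smul (α := Ω)
      intro ω
      rw [hfix ω, one_smul]
    rw [hz1] at hoz
    simp at hoz
    exact hq.one_lt.ne' hoz.symm
  · -- reverse: H is in the kernel
    intro hgH α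
    rw [himg]
    exact MulAction.orbit_eq_iff.mpr ⟨⟨g, hgH⟩, rfl⟩
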